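/- A 4-dimensional subspace Q ⊂ ℝ⁷ is coassociative (i.e., its orthogonal complement Q^⊥ is a 3-dimensional associative plane) if and only if φ₀ restricted to Q vanishes identically. -/

import Mathlib

noncomputable section
open scoped RealInnerProductSpace

/-- ℝ⁷ with its standard Euclidean inner product. -/
abbrev V7 := EuclideanSpace ℝ (Fin 7)

/-- The 3-form `dxᵢ ∧ dxⱼ ∧ dxₖ` evaluated on `(u,v,w)`. -/
def trip (i j k : Fin 7) (u v w : V7) : ℝ :=
  u i * (v j * w k - v k * w j) - u j * (v i * w k - v k * w i)
    + u k * (v i * w j - v j * w i)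

/-- The standard `G₂` 3-form
`φ₀ = dx₁₂₃ + dx₁₄₅ + dx₁₆₇ + dx₂₄₆ − dx₂₅₇ − dx₃₄₇ − dx₃₅₆` (0-indexed). -/
def phi0 (u v w : V7) : ℝ :=
  trip 0 1 2 u v w + trip 0 3 4 u v w + trip 0 5 6 u v w + trip 1 3 5 u v w
    - trip 1 4 6 u v w - trip 2 3 6 u v w - trip 2 4 5 u v w

/-- The cross product on ℝ⁷ defined by `⟨u × v, w⟩ = φ₀(u,v,w)`. -/
def cross7 (u v : V7) : V7 :=
  WithLp.toLp 2 (fun i => phi0 u v (EuclideanSpace.single i 1) : Fin 7 → ℝ)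

section lemmas

lemma phi0_add2 (u x y w : V7) : phi0 u (x + y) w = phi0 u x w + phi0 u y w := by
  simp only [phi0, trip, PiLp.add_apply]; ring
lemma phi0_smul2 (u x w : V7) (r : ℝ) : phi0 u (r • x) w = r * phi0 u x w := by
  simp only [phi0, trip, PiLp.smul_apply, smul_eq_mul]; ring
lemma phi0_add3 (u v x y : V7) : phi0 u v (x + y) = phi0 u v x + phi0 u v y := by
  simp only [phi0, trip, PiLp.add_apply]; ring
lemma phi0_smul3 (u v x : V7) (r : ℝ) : phi0 u v (r • x) = r * phi0 u v x := by
  simp only [phi0, trip, PiLp.smul_apply, smul_eq_mul]; ring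
lemma phi0_smul1 (u v w : V7) (r : ℝ) : phi0 (r • u) v w = r * phi0 u v w := by
  simp only [phi0, trip, PiLp.smul_apply, smul_eq_mul]; ring
lemma phi0_zero3 (u v : V7) : phi0 u v 0 = 0 := by simp [phi0, trip]
lemma phi0_zero1 (v w : V7) : phi0 0 v w = 0 := by simp [phi0, trip]
lemma phi0_svu (u v : V7) : phi0 u v u = 0 := by simp only [phi0, trip]; ring
lemma phi0_suv (u v : V7) : phi0 u u v = 0 := by simp only [phi0, trip]; ring
lemma phi0_uvv (u v : V7) : phi0 u v v = 0 := by simp only [phi0, trip]; ring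
lemma phi0_swap23 (u v w : V7) : phi0 u v w = - phi0 u w v := by
  simp only [phi0, trip]; ring

lemma cross7_add2 (u x y : V7) : cross7 u (x + y) = cross7 u x + cross7 u y := by
  ext i
  show phi0 u (x + y) _ = cross7 u x i + cross7 u y i
  rw [phi0_add2]; rfl
lemma cross7_smul2 (u x : V7) (r : ℝ) : cross7 u (r • x) = r • cross7 u x := by
  ext i
  show phi0 u (r • x) _ = r * cross7 u x i
  rw [phi0_smul2]; rfl
lemma cross7_self (u : V7) : cross7 u u = 0 := by
  ext i
  show phi0 u u _ = 0
  exact phi0_suv _ _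

lemma inner_co (u v : V7) : ⟪u, v⟫ =
    u 0 * v 0 + u 1 * v 1 + u 2 * v 2 + u 3 * v 3 + u 4 * v 4 + u 5 * v 5 + u 6 * v 6 := by
  simp [PiLp.inner_apply, RCLike.inner_apply, Fin.sum_univ_seven]; ring

lemma cross7_c0 (u v : V7) : cross7 u v 0 = u 1 * v 2 - u 2 * v 1 + u 3 * v 4 - u 4 * v 3 + u 5 * v 6 - u 6 * v 5 := by
  simp [cross7, phi0, trip, EuclideanSpace.single_apply]; ring
lemma cross7_c1 (u v : V7) : cross7 u v 1 = - u 0 * v 2 + u 2 * v 0 + u 3 * v 5 - u 4 * v 6 - u 5 * v 3 + u 6 * v 4 := by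
  simp [cross7, phi0, trip, EuclideanSpace.single_apply]; ring
lemma cross7_c2 (u v : V7) : cross7 u v 2 = u 0 * v 1 - u 1 * v 0 - u 3 * v 6 - u 4 * v 5 + u 5 * v 4 + u 6 * v 3 := by
  simp [cross7, phi0, trip, EuclideanSpace.single_apply]; ring
lemma cross7_c3 (u v : V7) : cross7 u v 3 = - u 0 * v 4 - u 1 * v 5 + u 2 * v 6 + u 4 * v 0 + u 5 * v 1 - u 6 * v 2 := by
  simp [cross7, phi0, trip, EuclideanSpace.single_apply]; ring
lemma cross7_c4 (u v : V7) : cross7 u v 4 = u 0 * v 3 + u 1 * v 6 + u 2 * v 5 - u 3 * v 0 - u 5 * v 2 - u 6 * v 1 := by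
  simp [cross7, phi0, trip, EuclideanSpace.single_apply]; ring
lemma cross7_c5 (u v : V7) : cross7 u v 5 = - u 0 * v 6 + u 1 * v 3 - u 2 * v 4 - u 3 * v 1 + u 4 * v 2 + u 6 * v 0 := by
  simp [cross7, phi0, trip, EuclideanSpace.single_apply]; ring
lemma cross7_c6 (u v : V7) : cross7 u v 6 = u 0 * v 5 - u 1 * v 4 - u 2 * v 3 + u 3 * v 2 + u 4 * v 1 - u 5 * v 0 := by
  simp [cross7, phi0, trip, EuclideanSpace.single_apply]; ring

/-- `⟨u × v, w⟩ = φ₀(u,v,w)`. -/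
lemma inner_cross (u v w : V7) : ⟪cross7 u v, w⟫ = phi0 u v w := by
  rw [inner_co]
  simp only [cross7_c0, cross7_c1, cross7_c2, cross7_c3, cross7_c4, cross7_c5, cross7_c6,
    phi0, trip]
  ring

lemma phi0_G (u v a : V7) :
    phi0 u v (cross7 a u) = ⟪u, a⟫ * ⟪u, v⟫ - ⟪u, u⟫ * ⟪a, v⟫ := by
  simp only [inner_co, phi0, trip, cross7_c0, cross7_c1, cross7_c2, cross7_c3, cross7_c4,
    cross7_c5, cross7_c6]
  ring

lemma inner_cross_cross (a v u : V7) :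
    ⟪cross7 a u, cross7 v u⟫ = ⟪u, u⟫ * ⟪a, v⟫ - ⟪u, a⟫ * ⟪u, v⟫ := by
  simp only [inner_co, cross7_c0, cross7_c1, cross7_c2, cross7_c3, cross7_c4,
    cross7_c5, cross7_c6]
  ring

lemma phi0_star (q x y w : V7) :
    phi0 (cross7 q x) (cross7 q y) w =
      2 * phi0 q x y * ⟪q, w⟫ - ⟪q, q⟫ * phi0 x y w
        + ⟪q, x⟫ * phi0 q y w - ⟪q, y⟫ * phi0 q x w := by
  simp only [inner_co, phi0, trip, cross7_c0, cross7_c1, cross7_c2, cross7_c3, cross7_c4,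
    cross7_c5, cross7_c6]
  ring

end lemmas

/-- a 4-plane `Q` is coassociative (its orthogonal complement is
a 3-dimensional associative plane) iff `φ₀` vanishes identically on `Q`. -/
theorem coassociative_iff_phi0_vanishes (Q : Submodule ℝ V7)
    (hdim : Module.finrank ℝ Q = 4) :
    (Module.finrank ℝ Qᗮ = 3 ∧ ∀ u ∈ Qᗮ, ∀ v ∈ Qᗮ, cross7 u v ∈ Qᗮ) ↔
      (∀ u ∈ Q, ∀ v ∈ Q, ∀ w ∈ Q, phi0 u v w = 0) := by
  have h7 : Module.finrank ℝ V7 = 7 := finrank_euclideanSpace_fin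
  have hQQ : Module.finrank ℝ Q + Module.finrank ℝ Qᗮ = 7 := by
    rw [Submodule.finrank_add_finrank_orthogonal]; exact h7
  constructor
  · rintro ⟨h3, hcl⟩ u hu v hv w hw
    by_cases hu0 : u = 0
    · rw [hu0]; exact phi0_zero1 v w
    have hnu : ‖u‖ ≠ 0 := norm_ne_zero_iff.2 hu0
    obtain ⟨e, heQ, hee, heu⟩ : ∃ e ∈ Q, ⟪e, e⟫ = (1:ℝ) ∧ e = ‖u‖⁻¹ • u :=
      ⟨‖u‖⁻¹ • u, Q.smul_mem _ hu, by
        rw [real_inner_smul_left, real_inner_smul_right, real_inner_self_eq_norm_mul_norm]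
        field_simp, rfl⟩
    suffices h : phi0 e v w = 0 by
      have h2 : ‖u‖⁻¹ * phi0 u v w = 0 := by rw [← phi0_smul1, ← heu]; exact h
      rcases mul_eq_zero.1 h2 with h' | h'
      · exact absurd h' (inv_ne_zero hnu)
      · exact h'
    clear heu hnu hu0 hu
    -- two orthonormal vectors in Qᗮ
    let B := (stdOrthonormalBasis ℝ Qᗮ).reindex (finCongr h3)
    obtain ⟨a, ha, b, hb, haa, hbb, hab⟩ :
        ∃ a ∈ Qᗮ, ∃ b ∈ Qᗮ, ⟪a, a⟫ = (1:ℝ) ∧ ⟪b, b⟫ = (1:ℝ) ∧ ⟪a, b⟫ = (0:ℝ) := by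
      refine ⟨(B 0 : V7), (B 0).2, (B 1 : V7), (B 1).2, ?_, ?_, ?_⟩
      · rw [← Submodule.coe_inner, real_inner_self_eq_norm_mul_norm, B.orthonormal.1 0]
        norm_num
      · rw [← Submodule.coe_inner, real_inner_self_eq_norm_mul_norm, B.orthonormal.1 1]
        norm_num
      · rw [← Submodule.coe_inner]
        exact B.orthonormal.2 (by decide)
    have hba : ⟪b, a⟫ = 0 := by rw [real_inner_comm]; exact hab
    set c : V7 := cross7 a b with hcdef
    have hc : c ∈ Qᗮ := hcl a ha b hb
    have hac : ⟪a, c⟫ = 0 := by rw [real_inner_comm, hcdef, inner_cross]; exact phi0_svu a b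
    have hbc : ⟪b, c⟫ = 0 := by rw [real_inner_comm, hcdef, inner_cross]; exact phi0_uvv a b
    have hca : ⟪c, a⟫ = 0 := by rw [real_inner_comm]; exact hac
    have hcb : ⟪c, b⟫ = 0 := by rw [real_inner_comm]; exact hbc
    have hcc : ⟪c, c⟫ = 1 := by
      rw [hcdef, inner_cross_cross a a b, haa, hba, hbb]
      ring
    -- orthogonality of Q and Qᗮ
    have hperp : ∀ p ∈ Qᗮ, ∀ z ∈ Q, ⟪z, p⟫ = 0 := fun p hp z hz =>
      (Submodule.mem_orthogonal Q p).1 hp z hz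
    -- the generators lie in Q
    have hmem : ∀ p, p ∈ Qᗮ → cross7 p e ∈ Q := by
      intro p hp
      rw [← Q.orthogonal_orthogonal, Submodule.mem_orthogonal]
      intro z hz
      rw [real_inner_comm, inner_cross, phi0_swap23, ← inner_cross, real_inner_comm]
      rw [hperp (cross7 p z) (hcl p hp z hz) e heQ]
      ring
    set F : Fin 4 → V7 := ![e, cross7 a e, cross7 b e, cross7 c e] with hF
    have hFQ : ∀ i, F i ∈ Q := by
      intro i
      fin_cases i
      · exact heQ
      · exact hmem a ha
      · exact hmem b hb
      · exact hmem c hc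
    -- helper inner product computations
    have hx0 : ∀ p : V7, ⟪e, cross7 p e⟫ = 0 := fun p => by
      rw [real_inner_comm, inner_cross]; exact phi0_uvv p e
    have hx0' : ∀ p : V7, ⟪cross7 p e, e⟫ = 0 := fun p => by
      rw [inner_cross]; exact phi0_uvv p e
    have hcr : ∀ p, p ∈ Qᗮ → ∀ r : V7, ⟪cross7 p e, cross7 r e⟫ = ⟪p, r⟫ := by
      intro p hp r
      rw [inner_cross_cross, hee, hperp p hp e heQ]
      ring
    have j11 : ⟪cross7 a e, cross7 a e⟫ = 1 := by rw [hcr a ha a]; exact haa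
    have j22 : ⟪cross7 b e, cross7 b e⟫ = 1 := by rw [hcr b hb b]; exact hbb
    have j33 : ⟪cross7 c e, cross7 c e⟫ = 1 := by rw [hcr c hc c]; exact hcc
    have j12 : ⟪cross7 a e, cross7 b e⟫ = 0 := by rw [hcr a ha b]; exact hab
    have j13 : ⟪cross7 a e, cross7 c e⟫ = 0 := by rw [hcr a ha c]; exact hac
    have j21 : ⟪cross7 b e, cross7 a e⟫ = 0 := by rw [hcr b hb a]; exact hba
    have j23 : ⟪cross7 b e, cross7 c e⟫ = 0 := by rw [hcr b hb c]; exact hbc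
    have j31 : ⟪cross7 c e, cross7 a e⟫ = 0 := by rw [hcr c hc a]; exact hca
    have j32 : ⟪cross7 c e, cross7 b e⟫ = 0 := by rw [hcr c hc b]; exact hcb
    have hON : Orthonormal ℝ F := by
      rw [orthonormal_iff_ite]
      intro i j
      fin_cases i <;> fin_cases j
      · rw [if_pos rfl]; exact hee
      · rw [if_neg (by decide)]; exact hx0 a
      · rw [if_neg (by decide)]; exact hx0 b
      · rw [if_neg (by decide)]; exact hx0 c
      · rw [if_neg (by decide)]; exact hx0' a
      · rw [if_pos rfl]; exact j11
      · rw [if_neg (by decide)]; exact j12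
      · rw [if_neg (by decide)]; exact j13
      · rw [if_neg (by decide)]; exact hx0' b
      · rw [if_neg (by decide)]; exact j21
      · rw [if_pos rfl]; exact j22
      · rw [if_neg (by decide)]; exact j23
      · rw [if_neg (by decide)]; exact hx0' c
      · rw [if_neg (by decide)]; exact j31
      · rw [if_neg (by decide)]; exact j32
      · rw [if_pos rfl]; exact j33
    have hsp : Submodule.span ℝ (Set.range F) = Q := by
      apply Submodule.eq_of_le_of_finrank_le
      · rw [Submodule.span_le]
        rintro z ⟨i, rfl⟩
        exact hFQ i
      · rw [finrank_span_eq_card hON.linearIndependent]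
        simp [hdim]
    have hw' : w ∈ Submodule.span ℝ (Set.range F) := hsp ▸ hw
    clear hw
    -- values of phi0 e v on the generators
    have hva : ⟪a, v⟫ = 0 := by rw [real_inner_comm]; exact hperp a ha v hv
    have hvb : ⟪b, v⟫ = 0 := by rw [real_inner_comm]; exact hperp b hb v hv
    have hvc : ⟪c, v⟫ = 0 := by rw [real_inner_comm]; exact hperp c hc v hv
    have hgen : ∀ i, phi0 e v (F i) = 0 := by
      intro i
      fin_cases i
      · exact phi0_svu e v
      · show phi0 e v (cross7 a e) = 0
        rw [phi0_G, hva, hperp a ha e heQ]; ring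
      · show phi0 e v (cross7 b e) = 0
        rw [phi0_G, hvb, hperp b hb e heQ]; ring
      · show phi0 e v (cross7 c e) = 0
        rw [phi0_G, hvc, hperp c hc e heQ]; ring
    induction hw' using Submodule.span_induction with
    | mem z hz => obtain ⟨i, rfl⟩ := hz; exact hgen i
    | zero => exact phi0_zero3 e v
    | add x y _ _ hx hy => rw [phi0_add3, hx, hy]; ring
    | smul r x _ hx => rw [phi0_smul3, hx]; ring
  · intro hphi
    have h3 : Module.finrank ℝ Qᗮ = 3 := by omega
    refine ⟨h3, ?_⟩
    intro a ha b hb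
    obtain ⟨q0, hq0Q, hq0⟩ := Q.ne_bot_iff.1 (by
      intro h
      rw [h, finrank_bot] at hdim
      norm_num at hdim)
    have hn0 : ‖q0‖ ≠ 0 := norm_ne_zero_iff.2 hq0
    obtain ⟨q, hqQ, hqq⟩ : ∃ q ∈ Q, ⟪q, q⟫ = (1:ℝ) :=
      ⟨‖q0‖⁻¹ • q0, Q.smul_mem _ hq0Q, by
        rw [real_inner_smul_left, real_inner_smul_right, real_inner_self_eq_norm_mul_norm]
        field_simp⟩
    have hqne : q ≠ 0 := by
      intro h
      rw [h, inner_zero_left] at hqq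
      norm_num at hqq
    have hmap : ∀ x, x ∈ Q → cross7 q x ∈ Qᗮ := by
      intro x hx
      rw [Submodule.mem_orthogonal]
      intro z hz
      rw [real_inner_comm, inner_cross]
      exact hphi q hqQ x hx z hz
    let f : Q →ₗ[ℝ] Qᗮ :=
      { toFun := fun x => ⟨cross7 q x, hmap x x.2⟩
        map_add' := fun x y => Subtype.ext (by simp [cross7_add2])
        map_smul' := fun r x => Subtype.ext (by simp [cross7_smul2]) }
    have hker : LinearMap.ker f = Submodule.span ℝ {(⟨q, hqQ⟩ : Q)} := by
      apply le_antisymm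
      · intro x hx
        have hcx : cross7 q (x : V7) = 0 := congrArg Subtype.val (LinearMap.mem_ker.1 hx)
        have h1 : (0:ℝ) = ⟪(x:V7), (x:V7)⟫ * ⟪q, q⟫ - ⟪(x:V7), q⟫ * ⟪(x:V7), q⟫ := by
          rw [← inner_cross_cross q q (x:V7), hcx, inner_zero_left]
        rw [hqq] at h1
        have hxq : (x : V7) = ⟪q, (x:V7)⟫ • q := by
          have h2 : ⟪(x:V7) - ⟪q,(x:V7)⟫ • q, (x:V7) - ⟪q,(x:V7)⟫ • q⟫ = 0 := by
            simp only [inner_sub_left, inner_sub_right, real_inner_smul_left,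
              real_inner_smul_right, hqq]
            linear_combination (-1 : ℝ) * h1 + (⟪(x:V7), q⟫) * real_inner_comm q (x:V7)
          have := inner_self_eq_zero.1 h2
          rw [sub_eq_zero] at this
          exact this
        rw [Submodule.mem_span_singleton]
        exact ⟨⟪q, (x:V7)⟫, Subtype.ext (by rw [Submodule.coe_smul]; exact hxq.symm)⟩
      · rw [Submodule.span_singleton_le_iff_mem]
        exact LinearMap.mem_ker.2 (Subtype.ext (cross7_self q))
    have hkrank : Module.finrank ℝ (LinearMap.ker f) = 1 := by
      rw [hker]
      exact finrank_span_singleton (fun h => hqne (congrArg Subtype.val h))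
    have hrank := LinearMap.finrank_range_add_finrank_ker f
    have hrange : LinearMap.range f = ⊤ := by
      apply Submodule.eq_top_of_finrank_eq
      rw [hdim] at hrank
      omega
    obtain ⟨x, hxa⟩ := LinearMap.range_eq_top.1 hrange ⟨a, ha⟩
    obtain ⟨y, hyb⟩ := LinearMap.range_eq_top.1 hrange ⟨b, hb⟩
    have hax : a = cross7 q (x:V7) := (congrArg Subtype.val hxa).symm
    have hby : b = cross7 q (y:V7) := (congrArg Subtype.val hyb).symm
    rw [Submodule.mem_orthogonal]
    intro z hz
    rw [real_inner_comm, inner_cross, hax, hby, phi0_star,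
      hphi q hqQ (x:V7) x.2 (y:V7) y.2, hphi (x:V7) x.2 (y:V7) y.2 z hz,
      hphi q hqQ (y:V7) y.2 z hz, hphi q hqQ (x:V7) x.2 z hz]
    ring
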